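/- For any non-constant rational function f ∈ K(x), the order of the fixing group G_f = {u ∈ Aut_K K(x) : f ∘ u = f} divides deg f. -/

import Mathlib

/-- The degree of a rational function: the maximum of the degrees of its
numerator and denominator (in lowest terms). -/
noncomputable def RatFunc.deg {K : Type*} [Field K] (f : RatFunc K) : ℕ :=
  max f.num.natDegree f.denom.natDegree

open Polynomial IntermediateField


namespace CardFixAux
variable {K : Type*} [Field K]



variable {K : Type*} [Field K]

/-- inner-to-outer variable swap on bivariate polynomials -/
noncomputable def swapHom (K : Type*) [Field K] : K[X][X] →+* K[X][X] :=
  eval₂RingHom (eval₂RingHom ((C : K[X] →+* K[X][X]).comp (C : K →+* K[X])) X) (C X)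

@[simp] lemma swapHom_CC (a : K) : swapHom K (C (C a)) = C (C a) := by
  simp [swapHom]

@[simp] lemma swapHom_CX : swapHom K (C X) = X := by
  simp [swapHom]

@[simp] lemma swapHom_X : swapHom K (X : K[X][X]) = C X := by
  simp [swapHom]

lemma swapHom_swapHom (A : K[X][X]) : swapHom K (swapHom K A) = A := by
  have h : (swapHom K).comp (swapHom K) = RingHom.id _ := by
    apply Polynomial.ringHom_ext'
    · apply Polynomial.ringHom_ext' <;> ext <;> simp
    · simp
  have := congrArg (fun g => g A) h
  simpa using this

/-- swap as ring equiv -/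
noncomputable def swapEquiv (K : Type*) [Field K] : K[X][X] ≃+* K[X][X] :=
  RingEquiv.ofRingHom (swapHom K) (swapHom K)
    (RingHom.ext fun A => swapHom_swapHom A) (RingHom.ext fun A => swapHom_swapHom A)

lemma swapEquiv_apply (A : K[X][X]) : swapEquiv K A = swapHom K A := rfl

lemma swapHom_map_C (p : K[X]) : swapHom K (p.map (C : K →+* K[X])) = C p := by
  rw [swapHom, coe_eval₂RingHom, eval₂_map]
  have h1 : ((eval₂RingHom ((C : K[X] →+* K[X][X]).comp (C : K →+* K[X])) X).comp
      (C : K →+* K[X])) = (C : K[X] →+* K[X][X]).comp (C : K →+* K[X]) := by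
    ext a; simp
  rw [h1]
  have := Polynomial.hom_eval₂ p (C : K →+* K[X]) (C : K[X] →+* K[X][X]) X
  rw [← this, eval₂_C_X]



/-- the bivariate polynomial p(Y) - t q(Y) in K[t][Y] -/
noncomputable def biv (p q : K[X]) : K[X][X] :=
  p.map (C : K →+* K[X]) - C X * q.map (C : K →+* K[X])

lemma biv_coeff (p q : K[X]) (i : ℕ) :
    (biv p q).coeff i = C (p.coeff i) - X * C (q.coeff i) := by
  simp [biv, coeff_map, coeff_C_mul]

lemma biv_coeff_eq_zero_iff (p q : K[X]) (i : ℕ) :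
    (biv p q).coeff i = 0 ↔ p.coeff i = 0 ∧ q.coeff i = 0 := by
  rw [biv_coeff]
  constructor
  · intro h
    have h0 := congrArg (fun r => Polynomial.coeff r 0) h
    have h1 := congrArg (fun r => Polynomial.coeff r 1) h
    simp [coeff_C, coeff_X_mul] at h0 h1
    exact ⟨h0, h1⟩
  · rintro ⟨h1, h2⟩; simp [h1, h2]

lemma swap_biv (p q : K[X]) : swapEquiv K (biv p q) = C p - X * C q := by
  rw [swapEquiv_apply, biv, map_sub, map_mul, swapHom_map_C, swapHom_map_C, swapHom_CX]

/-- C p - X * C q is irreducible when p, q are coprime and q ≠ 0 -/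
lemma irreducible_linear {p q : K[X]} (hco : IsCoprime p q) (hq : q ≠ 0) :
    Irreducible (C p - X * C q : K[X][X]) := by
  have hdeg : (C p - X * C q : K[X][X]).degree = 1 := by
    have h : (C p - X * C q : K[X][X]) = C (-q) * X + C p := by rw [map_neg]; ring
    rw [h, degree_linear (by simpa using hq)]
  constructor
  · intro hu
    rw [Polynomial.degree_eq_zero_of_isUnit hu] at hdeg
    exact one_ne_zero hdeg.symm
  · intro a b hab
    have ha0 : a ≠ 0 := by rintro rfl; rw [zero_mul] at hab; rw [hab] at hdeg; simp at hdeg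
    have hb0 : b ≠ 0 := by rintro rfl; rw [mul_zero] at hab; rw [hab] at hdeg; simp at hdeg
    have hsum : a.natDegree + b.natDegree = 1 := by
      have := natDegree_mul ha0 hb0
      rw [← hab] at this
      have h1 : (C p - X * C q : K[X][X]).natDegree = 1 :=
        natDegree_eq_of_degree_eq_some hdeg
      rw [h1] at this
      exact this.symm
    -- helper : if a constant divides, it is a unit
    have hconst : ∀ r : K[X], (C r : K[X][X]) ∣ C p - X * C q → IsUnit (C r : K[X][X]) := by
      intro r hdvd
      rw [Polynomial.C_dvd_iff_dvd_coeff] at hdvd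
      have hp' := hdvd 0
      have hq' := hdvd 1
      simp [coeff_sub, coeff_C, coeff_X_mul] at hp' hq'
      rw [Polynomial.isUnit_C]
      exact hco.isUnit_of_dvd' hp' hq'
    rcases Nat.eq_zero_or_pos a.natDegree with h | h
    · left
      have : a = C (a.coeff 0) := eq_C_of_natDegree_eq_zero h
      rw [this]; exact hconst _ ⟨b, by rw [← this, hab]⟩
    · right
      have hb : b.natDegree = 0 := by omega
      have : b = C (b.coeff 0) := eq_C_of_natDegree_eq_zero hb
      rw [this]; exact hconst _ ⟨a, by rw [← this, hab, mul_comm]⟩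


lemma biv_coeff_natDegree_le (p q : K[X]) (i : ℕ) : ((biv p q).coeff i).natDegree ≤ 1 := by
  rw [biv_coeff]
  refine le_trans (natDegree_sub_le _ _) ?_
  simp only [natDegree_C, max_le_iff]
  constructor
  · omega
  · refine le_trans (natDegree_mul_le) ?_
    simp [natDegree_X, natDegree_C]

lemma no_lin (f : RatFunc K) (hf : f ∉ Set.range (algebraMap K (RatFunc K))) (a b : K)
    (h : ∀ i, b * f.num.coeff i + a * f.denom.coeff i = 0) : b = 0 := by
  by_contra hb
  have hpoly : C b * f.num = C (-a) * f.denom := by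
    ext i
    simp only [coeff_C_mul]
    linear_combination h i
  have hmap := congrArg (algebraMap K[X] (RatFunc K)) hpoly
  rw [map_mul, map_mul, RatFunc.algebraMap_C, RatFunc.algebraMap_C] at hmap
  have hQ : algebraMap K[X] (RatFunc K) f.denom ≠ 0 :=
    RatFunc.algebraMap_ne_zero f.denom_ne_zero
  have hb' : algebraMap K (RatFunc K) b ≠ 0 := by
    simpa using hb
  have hfeq : f = algebraMap K (RatFunc K) (-a / b) := by
    rw [map_div₀, ← RatFunc.num_div_denom f, div_eq_div_iff hQ hb']
    rw [RatFunc.algebraMap_eq_C] at *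
    linear_combination hmap
  exact hf ⟨-a / b, hfeq.symm⟩

lemma biv_isPrimitive (f : RatFunc K) (hf : f ∉ Set.range (algebraMap K (RatFunc K))) :
    (biv f.num f.denom).IsPrimitive := by
  set p := f.num with hp
  set q := f.denom with hq
  intro r hr
  by_contra hru
  have hr' : ∀ i, r ∣ (biv p q).coeff i := fun i => (C_dvd_iff_dvd_coeff r _).mp hr i
  have hqlc : q.coeff q.natDegree ≠ 0 := by
    rw [← leadingCoeff]
    exact leadingCoeff_ne_zero.mpr f.denom_ne_zero
  have hcne : (biv p q).coeff q.natDegree ≠ 0 := by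
    rw [Ne, biv_coeff_eq_zero_iff]
    tauto
  have hr0 : r ≠ 0 := by
    rintro rfl
    exact hcne (zero_dvd_iff.mp (hr' q.natDegree))
  have hdr : r.natDegree = 1 := by
    have h1 : r.natDegree ≤ 1 :=
      le_trans (Polynomial.natDegree_le_of_dvd (hr' q.natDegree) hcne)
        (biv_coeff_natDegree_le p q _)
    have h2 : r.natDegree ≠ 0 := by
      intro h0
      apply hru
      rw [Polynomial.isUnit_iff_degree_eq_zero, degree_eq_natDegree hr0, h0]
      rfl
    omega
  set a := r.coeff 0 with ha
  set b := r.coeff 1 with hbdef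
  have hlin : ∀ i, b * p.coeff i + a * q.coeff i = 0 := by
    intro i
    obtain ⟨s, hs⟩ := hr' i
    rw [biv_coeff] at hs
    rcases eq_or_ne s 0 with hs0 | hs0
    · rw [hs0, mul_zero] at hs
      have hz := (biv_coeff_eq_zero_iff p q i).mp (by rw [biv_coeff]; exact hs)
      rw [hz.1, hz.2]; ring
    · have hsdeg : s.natDegree = 0 := by
        have hmul : (r * s).natDegree = 1 + s.natDegree := by
          rw [natDegree_mul hr0 hs0, hdr]
        have hle : (r * s).natDegree ≤ 1 := by
          rw [← hs]
          have := biv_coeff_natDegree_le p q i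
          rwa [biv_coeff] at this
        omega
      rw [eq_C_of_natDegree_eq_zero hsdeg] at hs
      have h0 := congrArg (fun t => Polynomial.coeff t 0) hs
      have h1 := congrArg (fun t => Polynomial.coeff t 1) hs
      simp [coeff_C, coeff_X_mul, coeff_mul_C] at h0 h1
      linear_combination b * h0 - a * h1
  have hb0 : b = 0 := no_lin f hf a b hlin
  have : r.leadingCoeff ≠ 0 := leadingCoeff_ne_zero.mpr hr0
  rw [leadingCoeff, hdr] at this
  exact this hb0


lemma coeff_deg_ne (f : RatFunc K) (hf : f ∉ Set.range (algebraMap K (RatFunc K)))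
    (h : f.denom.coeff f.deg = 0) : f.num.coeff f.deg ≠ 0 := by
  have hf0 : f ≠ 0 := by rintro rfl; exact hf ⟨0, map_zero _⟩
  rcases le_total f.num.natDegree f.denom.natDegree with hle | hle
  · exfalso
    have : f.deg = f.denom.natDegree := max_eq_right hle
    rw [this, ← leadingCoeff] at h
    exact leadingCoeff_ne_zero.mpr f.denom_ne_zero h
  · have : f.deg = f.num.natDegree := max_eq_left hle
    rw [this, ← leadingCoeff]
    exact leadingCoeff_ne_zero.mpr (RatFunc.num_ne_zero hf0)

/-- The polynomial p(Y) - g q(Y) over an intermediate field containing an element g mapping to f -/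
noncomputable def polyF (f : RatFunc K) (F : IntermediateField K (RatFunc K)) (g : F) :
    Polynomial F :=
  f.num.map (algebraMap K F) - C g * f.denom.map (algebraMap K F)

lemma polyF_coeff (f : RatFunc K) (F : IntermediateField K (RatFunc K)) (g : F) (i : ℕ) :
    (polyF f F g).coeff i
      = algebraMap K F (f.num.coeff i) - g * algebraMap K F (f.denom.coeff i) := by
  simp [polyF, coeff_map, coeff_C_mul]

lemma polyF_coeff_deg_ne_zero (f : RatFunc K) (hf : f ∉ Set.range (algebraMap K (RatFunc K)))
    (F : IntermediateField K (RatFunc K)) (g : F) (hg : (g : RatFunc K) = f) :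
    (polyF f F g).coeff f.deg ≠ 0 := by
  rw [polyF_coeff]
  intro h
  have h' := congrArg (algebraMap F (RatFunc K)) h
  rw [(algebraMap (↥F) (RatFunc K)).map_sub, (algebraMap (↥F) (RatFunc K)).map_mul,
    (algebraMap (↥F) (RatFunc K)).map_zero, ← IsScalarTower.algebraMap_apply K F (RatFunc K),
    ← IsScalarTower.algebraMap_apply K F (RatFunc K), IntermediateField.algebraMap_apply,
    hg] at h'
  by_cases hq : f.denom.coeff f.deg = 0
  · rw [hq, map_zero, mul_zero, sub_zero] at h'
    exact coeff_deg_ne f hf hq ((_root_.map_eq_zero (algebraMap K (RatFunc K))).mp h')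
  · apply hf
    refine ⟨f.num.coeff f.deg / f.denom.coeff f.deg, ?_⟩
    have hq' : algebraMap K (RatFunc K) (f.denom.coeff f.deg) ≠ 0 := by simpa using hq
    rw [map_div₀, div_eq_iff hq']
    linear_combination h'

lemma polyF_ne_zero (f : RatFunc K) (hf : f ∉ Set.range (algebraMap K (RatFunc K)))
    (F : IntermediateField K (RatFunc K)) (g : F) (hg : (g : RatFunc K) = f) :
    polyF f F g ≠ 0 := by
  intro h
  exact polyF_coeff_deg_ne_zero f hf F g hg (by rw [h, coeff_zero])

lemma polyF_natDegree (f : RatFunc K) (hf : f ∉ Set.range (algebraMap K (RatFunc K)))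
    (F : IntermediateField K (RatFunc K)) (g : F) (hg : (g : RatFunc K) = f) :
    (polyF f F g).natDegree = f.deg := by
  refine le_antisymm ?_ (le_natDegree_of_ne_zero (polyF_coeff_deg_ne_zero f hf F g hg))
  refine le_trans (natDegree_sub_le _ _) ?_
  rw [max_le_iff]
  constructor
  · exact le_trans natDegree_map_le (le_max_left _ _)
  · refine le_trans natDegree_mul_le ?_
    rw [natDegree_C, zero_add]
    exact le_trans natDegree_map_le (le_max_right _ _)

lemma polyF_aeval (f : RatFunc K) (F : IntermediateField K (RatFunc K)) (g : F)
    (hg : (g : RatFunc K) = f) :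
    aeval (RatFunc.X : RatFunc K) (polyF f F g) = 0 := by
  have h1 : ∀ r : K[X], aeval (RatFunc.X : RatFunc K) (r.map (algebraMap K F))
      = algebraMap K[X] (RatFunc K) r := by
    intro r
    rw [aeval_map_algebraMap, ← RatFunc.algebraMap_X, aeval_algebraMap_apply,
      aeval_X_left_apply]
  rw [polyF, map_sub, map_mul, h1, h1, aeval_C, IntermediateField.algebraMap_apply, hg,
    sub_eq_zero]
  rw [← div_eq_iff (RatFunc.algebraMap_ne_zero f.denom_ne_zero)]
  exact RatFunc.num_div_denom f

lemma isAlgebraic_X (f : RatFunc K) (hf : f ∉ Set.range (algebraMap K (RatFunc K)))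
    (F : IntermediateField K (RatFunc K)) (g : F) (hg : (g : RatFunc K) = f) :
    IsAlgebraic F (RatFunc.X : RatFunc K) :=
  ⟨polyF f F g, polyF_ne_zero f hf F g hg, polyF_aeval f F g hg⟩

lemma transcendental_f (f : RatFunc K) (hf : f ∉ Set.range (algebraMap K (RatFunc K))) :
    Transcendental K f := by
  intro halg
  haveI : Algebra.IsAlgebraic K K⟮f⟯ :=
    IntermediateField.isAlgebraic_adjoin_simple halg.isIntegral
  haveI : Algebra.IsIntegral K K⟮f⟯ := Algebra.IsAlgebraic.isIntegral
  have hx : IsIntegral K⟮f⟯ (RatFunc.X : RatFunc K) :=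
    (isAlgebraic_X f hf K⟮f⟯ ⟨f, IntermediateField.mem_adjoin_simple_self K f⟩ rfl).isIntegral
  have hX : IsIntegral K (RatFunc.X : RatFunc K) := isIntegral_trans _ hx
  have htX : Transcendental K (RatFunc.X : RatFunc K) := by
    rw [← RatFunc.algebraMap_X]
    exact (transcendental_algebraMap_iff
      (IsFractionRing.injective K[X] (RatFunc K))).mpr (transcendental_X K)
  exact htX hX.isAlgebraic


end CardFixAux
section ETest
variable {K : Type*} [Field K]
namespace CardFixAux

noncomputable def theta (f : RatFunc K) (htr : Transcendental K f) :
    RatFunc K →ₐ[K] RatFunc K :=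
  IsFractionRing.liftAlgHom (g := Polynomial.aeval f) (transcendental_iff_injective.mp htr)

lemma theta_algebraMap (f : RatFunc K) (htr : Transcendental K f) (r : K[X]) :
    theta f htr (algebraMap K[X] (RatFunc K) r) = Polynomial.aeval f r := by
  simp [theta, IsFractionRing.liftAlgHom_apply, IsFractionRing.lift_algebraMap]

lemma theta_X (f : RatFunc K) (htr : Transcendental K f) :
    theta f htr RatFunc.X = f := by
  rw [← RatFunc.algebraMap_X, theta_algebraMap, aeval_X]

noncomputable def Ff (f : RatFunc K) (htr : Transcendental K f) :
    IntermediateField K (RatFunc K) := (theta f htr).fieldRange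

noncomputable def psiHom (f : RatFunc K) (htr : Transcendental K f) :
    RatFunc K →ₐ[K] (Ff f htr) where
  toFun z := ⟨theta f htr z, AlgHom.mem_fieldRange.mpr ⟨z, rfl⟩⟩
  map_one' := by ext; simp
  map_mul' x y := by ext; simp
  map_zero' := by ext; simp
  map_add' x y := by ext; simp
  commutes' r := by
    ext
    simp only []
    show theta f htr (algebraMap K (RatFunc K) r) = ((algebraMap K (Ff f htr) r : Ff f htr) : RatFunc K)
    rw [(theta f htr).commutes r, IsScalarTower.algebraMap_apply K (Ff f htr) (RatFunc K)]
    rfl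

lemma psiHom_bijective (f : RatFunc K) (htr : Transcendental K f) :
    Function.Bijective (psiHom f htr) := by
  constructor
  · intro a b h
    have : theta f htr a = theta f htr b := congrArg Subtype.val h
    exact (theta f htr).toRingHom.injective this
  · rintro ⟨y, hy⟩
    obtain ⟨z, hz⟩ := AlgHom.mem_fieldRange.mp hy
    exact ⟨z, Subtype.ext hz⟩

noncomputable def psi (f : RatFunc K) (htr : Transcendental K f) :
    RatFunc K ≃ₐ[K] (Ff f htr) :=
  AlgEquiv.ofBijective (psiHom f htr) (psiHom_bijective f htr)

noncomputable def yf (f : RatFunc K) (htr : Transcendental K f) : Ff f htr :=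
  psi f htr RatFunc.X

lemma yf_coe (f : RatFunc K) (htr : Transcendental K f) :
    ((yf f htr : Ff f htr) : RatFunc K) = f := theta_X f htr

lemma polyF_eq (f : RatFunc K) (htr : Transcendental K f) :
    polyF f (Ff f htr) (yf f htr)
      = ((biv f.num f.denom).map (algebraMap K[X] (RatFunc K))).map
          ((psi f htr : RatFunc K ≃+* Ff f htr) : RatFunc K →+* Ff f htr) := by
  rw [Polynomial.map_map]
  set χ : K[X] →+* (Ff f htr) :=
    (((psi f htr : RatFunc K ≃+* Ff f htr) : RatFunc K →+* Ff f htr)).comp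
      (algebraMap K[X] (RatFunc K)) with hχ
  rw [biv, Polynomial.map_sub, Polynomial.map_mul, map_C, Polynomial.map_map,
    Polynomial.map_map]
  have h1 : χ.comp (C : K →+* K[X]) = algebraMap K (Ff f htr) := RingHom.ext fun a => by
    show psi f htr (algebraMap K[X] (RatFunc K) (C a)) = algebraMap K (Ff f htr) a
    rw [RatFunc.algebraMap_C, ← RatFunc.algebraMap_eq_C]
    exact (psi f htr).commutes a
  have h2 : χ X = yf f htr := by
    show psi f htr (algebraMap K[X] (RatFunc K) X) = yf f htr
    rw [RatFunc.algebraMap_X]; rfl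
  rw [h1, h2, polyF]

lemma irreducible_polyF (f : RatFunc K) (hf : f ∉ Set.range (algebraMap K (RatFunc K)))
    (htr : Transcendental K f) :
    Irreducible (polyF f (Ff f htr) (yf f htr)) := by
  letI := Classical.decEq K
  have h1 : Irreducible (biv f.num f.denom) := by
    rw [← MulEquiv.irreducible_iff (swapEquiv K), swap_biv]
    exact irreducible_linear (RatFunc.isCoprime_num_denom f) f.denom_ne_zero
  have h2 : Irreducible ((biv f.num f.denom).map (algebraMap K[X] (RatFunc K))) :=
    ((biv_isPrimitive f hf).irreducible_iff_irreducible_map_fraction_map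
      (K := RatFunc K)).mp h1
  rw [polyF_eq f htr]
  have h3 : ((biv f.num f.denom).map (algebraMap K[X] (RatFunc K))).map
        ((psi f htr : RatFunc K ≃+* Ff f htr) : RatFunc K →+* Ff f htr)
      = Polynomial.mapEquiv (psi f htr : RatFunc K ≃+* Ff f htr)
          ((biv f.num f.denom).map (algebraMap K[X] (RatFunc K))) := rfl
  rw [h3, MulEquiv.irreducible_iff]
  exact h2

lemma minpoly_X_natDegree (f : RatFunc K) (hf : f ∉ Set.range (algebraMap K (RatFunc K)))
    (htr : Transcendental K f) :
    (minpoly (Ff f htr) (RatFunc.X : RatFunc K)).natDegree = f.deg := by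
  have hirr := irreducible_polyF f hf htr
  have haev := polyF_aeval f (Ff f htr) (yf f htr) (yf_coe f htr)
  have heq := minpoly.eq_of_irreducible hirr haev
  have hne := polyF_ne_zero f hf (Ff f htr) (yf f htr) (yf_coe f htr)
  have hlc : (polyF f (Ff f htr) (yf f htr)).leadingCoeff ≠ 0 :=
    leadingCoeff_ne_zero.mpr hne
  rw [← heq, natDegree_mul hne (by simpa using inv_ne_zero hlc), natDegree_C, add_zero]
  exact polyF_natDegree f hf (Ff f htr) (yf f htr) (yf_coe f htr)

lemma adjoin_X_top (f : RatFunc K) (htr : Transcendental K f) :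
    IntermediateField.adjoin (Ff f htr) {(RatFunc.X : RatFunc K)} = ⊤ := by
  rw [eq_top_iff]
  rintro g -
  have hmem : ∀ r : K[X], algebraMap K[X] (RatFunc K) r
      ∈ IntermediateField.adjoin (Ff f htr) {(RatFunc.X : RatFunc K)} := by
    intro r
    induction r using Polynomial.induction_on with
    | C a =>
      rw [RatFunc.algebraMap_C, ← RatFunc.algebraMap_eq_C,
        IsScalarTower.algebraMap_apply K (Ff f htr) (RatFunc K)]
      exact (IntermediateField.adjoin (Ff f htr) _).algebraMap_mem _
    | add p q hp hq =>
      rw [map_add]; exact add_mem hp hq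
    | monomial n a ih =>
      rw [map_mul, map_pow, RatFunc.algebraMap_X, RatFunc.algebraMap_C,
        ← RatFunc.algebraMap_eq_C, IsScalarTower.algebraMap_apply K (Ff f htr) (RatFunc K)]
      exact mul_mem ((IntermediateField.adjoin (Ff f htr) _).algebraMap_mem _)
        (pow_mem (IntermediateField.mem_adjoin_simple_self (Ff f htr) _) _)
  rw [← RatFunc.num_div_denom g]
  exact div_mem (hmem g.num) (hmem g.denom)

lemma finiteDimensional_Ff (f : RatFunc K) (hf : f ∉ Set.range (algebraMap K (RatFunc K)))
    (htr : Transcendental K f) :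
    FiniteDimensional (Ff f htr) (RatFunc K) := by
  have hint : IsIntegral (Ff f htr) (RatFunc.X : RatFunc K) :=
    (isAlgebraic_X f hf (Ff f htr) (yf f htr) (yf_coe f htr)).isIntegral
  have h1 := IntermediateField.adjoin.finiteDimensional hint
  rw [adjoin_X_top f htr] at h1
  exact IntermediateField.topEquiv.toLinearEquiv.finiteDimensional

lemma finrank_Ff (f : RatFunc K) (hf : f ∉ Set.range (algebraMap K (RatFunc K)))
    (htr : Transcendental K f) :
    Module.finrank (Ff f htr) (RatFunc K) = f.deg := by
  have hint : IsIntegral (Ff f htr) (RatFunc.X : RatFunc K) :=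
    (isAlgebraic_X f hf (Ff f htr) (yf f htr) (yf_coe f htr)).isIntegral
  have h1 := IntermediateField.adjoin.finrank hint
  rw [adjoin_X_top f htr] at h1
  rw [← IntermediateField.topEquiv.toLinearEquiv.finrank_eq, h1,
    minpoly_X_natDegree f hf htr]

end CardFixAux
end ETest
namespace CardFixAux
variable {K : Type*} [Field K]

lemma fix_of_fixes_f (f : RatFunc K) (htr : Transcendental K f)
    (σ : RatFunc K ≃ₐ[K] RatFunc K) (hσ : σ f = f) (z : Ff f htr) :
    σ (algebraMap (Ff f htr) (RatFunc K) z) = algebraMap (Ff f htr) (RatFunc K) z := by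
  have key : ∀ r : K[X], σ (Polynomial.aeval f r) = Polynomial.aeval f r := by
    intro r
    have h : σ.toAlgHom.comp (Polynomial.aeval f) = Polynomial.aeval f :=
      Polynomial.algHom_ext (by simpa using hσ)
    exact DFunLike.congr_fun h r
  have key2 : ∀ w : RatFunc K, σ (theta f htr w) = theta f htr w := by
    intro w
    rw [← RatFunc.num_div_denom w, map_div₀, map_div₀, theta_algebraMap, theta_algebraMap,
      key, key]
  obtain ⟨w, hw⟩ := AlgHom.mem_fieldRange.mp z.2
  rw [IntermediateField.algebraMap_apply, ← hw]
  exact key2 w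

end CardFixAux

theorem card_fixingGroup_dvd_deg' {K : Type*} [Field K] (f : RatFunc K)
    (hf : f ∉ Set.range (algebraMap K (RatFunc K))) :
    Nat.card {σ : RatFunc K ≃ₐ[K] RatFunc K // σ f = f} ∣ f.deg := by
  classical
  have htr := CardFixAux.transcendental_f f hf
  set F := CardFixAux.Ff f htr with hF
  haveI : FiniteDimensional F (RatFunc K) := CardFixAux.finiteDimensional_Ff f hf htr
  have hyf : algebraMap F (RatFunc K) (CardFixAux.yf f htr) = f := CardFixAux.yf_coe f htr
  let e : {σ : RatFunc K ≃ₐ[K] RatFunc K // σ f = f} ≃ (RatFunc K ≃ₐ[F] RatFunc K) :=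
    { toFun := fun σ => AlgEquiv.ofRingEquiv (f := σ.1.toRingEquiv)
        (CardFixAux.fix_of_fixes_f f htr σ.1 σ.2)
      invFun := fun τ => ⟨τ.restrictScalars K, by
        show τ f = f
        rw [← hyf, AlgEquiv.commutes]⟩
      left_inv := fun σ => Subtype.ext (AlgEquiv.ext fun z => rfl)
      right_inv := fun τ => AlgEquiv.ext fun z => rfl }
  rw [Nat.card_congr e]
  have hdvd : Nat.card (RatFunc K ≃ₐ[F] RatFunc K) ∣ Module.finrank F (RatFunc K) := by
    have hcard := IntermediateField.finrank_fixedField_eq_card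
      (⊤ : Subgroup (RatFunc K ≃ₐ[F] RatFunc K))
    have htop : Fintype.card ↥(⊤ : Subgroup (RatFunc K ≃ₐ[F] RatFunc K))
        = Nat.card (RatFunc K ≃ₐ[F] RatFunc K) := by
      rw [← Nat.card_eq_fintype_card, Subgroup.card_top]
    rw [Subgroup.card_top] at hcard
    refine ⟨Module.finrank F (IntermediateField.fixedField
      (⊤ : Subgroup (RatFunc K ≃ₐ[F] RatFunc K))), ?_⟩
    rw [← hcard, mul_comm, Module.finrank_mul_finrank]
  rwa [CardFixAux.finrank_Ff f hf htr] at hdvd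

/-- The order of the fixing group of a non-constant rational function `f`
divides `deg f`. -/
theorem card_fixingGroup_dvd_deg {K : Type*} [Field K] (f : RatFunc K)
    (hf : f ∉ Set.range (algebraMap K (RatFunc K))) :
    Nat.card {σ : RatFunc K ≃ₐ[K] RatFunc K // σ f = f} ∣ f.deg :=
  card_fixingGroup_dvd_deg' f hf
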